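/- There exists a constant C > 0 such that the following holds. Let 𝔽_q be a finite field of order q, and let B, C ⊆ 𝔽_q be sets with B ∩ C = ∅ and |B|·|C| ≥ C·q. Then the quotient set of the difference set B − C satisfies |(B − C)/(B − C)| ≥ q/3, where B − C = {b − c : b ∈ B, c ∈ C} and (B − C)/(B − C) = {x/y : x, y ∈ B − C, y ≠ 0}. -/

import Mathlib

open Finset Pointwise Complex ComplexConjugate

/-- The quotient set `S/S = {a/b : a, b ∈ S, b ≠ 0}`. -/
def quotSet {F : Type*} [DivisionRing F] [DecidableEq F] (S : Finset F) : Finset F :=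
  (S ×ˢ S.filter fun b => b ≠ 0).image fun x => x.1 / x.2

namespace BalogAux

variable {F : Type} [Field F] [Fintype F] [DecidableEq F]

/-- Exponential sum over a finset. -/
noncomputable def W (ψ : AddChar F ℂ) (S : Finset F) (a : F) : ℂ := ∑ b ∈ S, ψ (a * b)

lemma conj_W (ψ : AddChar F ℂ) (S : Finset F) (u : F) :
    conj (W ψ S u) = ∑ b ∈ S, ψ (u * (-b)) := by
  rw [W, map_sum]
  exact Finset.sum_congr rfl fun b _ => by rw [mul_neg, AddChar.map_neg_eq_conj]

lemma W_zero (ψ : AddChar F ℂ) (S : Finset F) : W ψ S 0 = S.card := by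
  simp [W]

lemma orth (ψ : AddChar F ℂ) (hψ : ψ.IsPrimitive) (t : F) :
    ∑ a : F, ψ (a * t) = if t = 0 then (Fintype.card F : ℂ) else 0 := by
  split_ifs with h
  · subst h; simp [Finset.card_univ]
  · have h2 := AddChar.sum_eq_zero_of_ne_one (hψ h)
    rw [← h2]
    exact Finset.sum_congr rfl fun a _ => by rw [AddChar.mulShift_apply, mul_comm]

lemma double_sum (ψ : AddChar F ℂ) (hψ : ψ.IsPrimitive) (X Y : Finset F) :
    ∑ a : F, W ψ X a * conj (W ψ Y a)
      = ∑ b ∈ X, ∑ c ∈ Y, if b - c = 0 then (Fintype.card F : ℂ) else 0 := by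
  have e : ∀ a : F, W ψ X a * conj (W ψ Y a) = ∑ b ∈ X, ∑ c ∈ Y, ψ (a * (b - c)) := by
    intro a
    rw [conj_W, W, Finset.sum_mul_sum]
    refine Finset.sum_congr rfl fun b _ => Finset.sum_congr rfl fun c _ => ?_
    rw [← AddChar.map_add_eq_mul]
    congr 1; ring
  simp only [e]
  rw [Finset.sum_comm]
  refine Finset.sum_congr rfl fun b _ => ?_
  rw [Finset.sum_comm]
  exact Finset.sum_congr rfl fun c _ => orth ψ hψ _

lemma pars (ψ : AddChar F ℂ) (hψ : ψ.IsPrimitive) (S : Finset F) :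
    ∑ a : F, W ψ S a * conj (W ψ S a) = (Fintype.card F : ℂ) * S.card := by
  rw [double_sum ψ hψ S S]
  calc ∑ b ∈ S, ∑ c ∈ S, (if b - c = 0 then (Fintype.card F : ℂ) else 0)
      = ∑ _b ∈ S, (Fintype.card F : ℂ) := by
        refine Finset.sum_congr rfl fun b hb => ?_
        simp only [sub_eq_zero]
        simp [Finset.sum_ite_eq, hb]
    _ = (Fintype.card F : ℂ) * S.card := by
        rw [Finset.sum_const, nsmul_eq_mul]; ring

lemma disj_sum (ψ : AddChar F ℂ) (hψ : ψ.IsPrimitive) {X Y : Finset F}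
    (h : ∀ b ∈ X, b ∉ Y) :
    ∑ a : F, W ψ X a * conj (W ψ Y a) = 0 := by
  rw [double_sum ψ hψ X Y]
  refine Finset.sum_eq_zero fun b hb => Finset.sum_eq_zero fun c hc => ?_
  exact if_neg fun e => h b hb (by rwa [← sub_eq_zero.1 e] at hc)

lemma quad_sum (ψ : AddChar F ℂ) (hψ : ψ.IsPrimitive) (X Y : Finset F) (x : F)
    (hx : ∀ b1 ∈ X, ∀ c1 ∈ Y, ∀ b2 ∈ X, ∀ c2 ∈ Y, b1 - c1 - x*b2 + x*c2 ≠ 0) :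
    ∑ a : F, (W ψ X a * conj (W ψ Y a)) * conj (W ψ X (a*x) * conj (W ψ Y (a*x))) = 0 := by
  have e : ∀ a : F, (W ψ X a * conj (W ψ Y a)) * conj (W ψ X (a*x) * conj (W ψ Y (a*x)))
      = ∑ z ∈ (X ×ˢ Y) ×ˢ (X ×ˢ Y), ψ (a * (z.1.1 - z.1.2 - x*z.2.1 + x*z.2.2)) := by
    intro a
    have h0 : (W ψ X a * conj (W ψ Y a)) * conj (W ψ X (a*x) * conj (W ψ Y (a*x)))
        = ((∑ b1 ∈ X, ψ (a * b1)) * (∑ c1 ∈ Y, ψ (a * (-c1)))) *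
            ((∑ b2 ∈ X, ψ ((a*x) * (-b2))) * (∑ c2 ∈ Y, ψ ((a*x) * c2))) := by
      rw [map_mul, Complex.conj_conj, conj_W, conj_W]
      simp only [W]
      try ring
    have e1 : (∑ b1 ∈ X, ψ (a * b1)) * (∑ c1 ∈ Y, ψ (a * (-c1)))
        = ∑ p ∈ X ×ˢ Y, ψ (a * p.1) * ψ (a * (-p.2)) := by
      rw [Finset.sum_mul_sum]
      exact (Finset.sum_product' X Y fun b c => ψ (a * b) * ψ (a * (-c))).symm
    have e2 : (∑ b2 ∈ X, ψ ((a*x) * (-b2))) * (∑ c2 ∈ Y, ψ ((a*x) * c2))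
        = ∑ r ∈ X ×ˢ Y, ψ ((a*x) * (-r.1)) * ψ ((a*x) * r.2) := by
      rw [Finset.sum_mul_sum]
      exact (Finset.sum_product' X Y fun b c => ψ ((a*x) * (-b)) * ψ ((a*x) * c)).symm
    calc (W ψ X a * conj (W ψ Y a)) * conj (W ψ X (a*x) * conj (W ψ Y (a*x)))
        = ∑ p ∈ X ×ˢ Y, ∑ r ∈ X ×ˢ Y,
            (ψ (a * p.1) * ψ (a * (-p.2))) * (ψ ((a*x) * (-r.1)) * ψ ((a*x) * r.2)) := by
          rw [h0, e1, e2, Finset.sum_mul_sum]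
      _ = ∑ p ∈ X ×ˢ Y, ∑ r ∈ X ×ˢ Y, ψ (a * (p.1 - p.2 - x*r.1 + x*r.2)) := by
          refine Finset.sum_congr rfl fun p _ => Finset.sum_congr rfl fun r _ => ?_
          simp only [← AddChar.map_add_eq_mul]
          congr 1; ring
      _ = ∑ z ∈ (X ×ˢ Y) ×ˢ (X ×ˢ Y), ψ (a * (z.1.1 - z.1.2 - x*z.2.1 + x*z.2.2)) :=
          (Finset.sum_product' (X ×ˢ Y) (X ×ˢ Y)
            fun p r => ψ (a * (p.1 - p.2 - x*r.1 + x*r.2))).symm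
  simp only [e]
  rw [Finset.sum_comm]
  refine Finset.sum_eq_zero fun z hz => ?_
  have hz1 := (Finset.mem_product.1 hz).1
  have hz2 := (Finset.mem_product.1 hz).2
  have hb1 := (Finset.mem_product.1 hz1).1
  have hc1 := (Finset.mem_product.1 hz1).2
  have hb2 := (Finset.mem_product.1 hz2).1
  have hc2 := (Finset.mem_product.1 hz2).2
  rw [orth ψ hψ, if_neg (hx _ hb1 _ hc1 _ hb2 _ hc2)]

lemma exists_prim (F : Type) [Field F] [Fintype F] : ∃ ψ : AddChar F ℂ, ψ.IsPrimitive := by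
  have hp : Fact (ringChar F).Prime := ⟨CharP.char_is_prime F _⟩
  haveI := hp
  haveI : NeZero (ringChar F) := ⟨hp.out.ne_zero⟩
  have hζ := Complex.isPrimitiveRoot_exp (ringChar F) hp.out.ne_zero
  have hψ₀ : (AddChar.zmodChar (ringChar F)
      ((IsPrimitiveRoot.iff_def _ _).mp hζ).1).IsPrimitive :=
    AddChar.zmodChar_primitive_of_primitive_root _ hζ
  letI : Algebra (ZMod (ringChar F)) F := ZMod.algebra _ _
  refine ⟨(AddChar.zmodChar (ringChar F)
      ((IsPrimitiveRoot.iff_def _ _).mp hζ).1).compAddMonoidHom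
      (Algebra.trace (ZMod (ringChar F)) F).toAddMonoidHom,
    AddChar.IsPrimitive.of_ne_one ?_⟩
  obtain ⟨a, ha⟩ := FiniteField.trace_to_zmod_nondegenerate F (one_ne_zero (α := F))
  rw [one_mul] at ha
  refine AddChar.ne_one_iff.2 ⟨a, fun hf => ha ?_⟩
  rw [AddChar.compAddMonoidHom_apply] at hf
  exact (hψ₀.zmod_char_eq_one_iff (ringChar F) _).mp hf

end BalogAux

theorem balog_quotient_of_difference :
    ∃ C : ℝ, 0 < C ∧
      ∀ (F : Type) [Field F] [Fintype F] [DecidableEq F] (B C' : Finset F),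
        B ∩ C' = ∅ →
        C * (Fintype.card F : ℝ) ≤ (B.card : ℝ) * (C'.card : ℝ) →
        (Fintype.card F : ℝ) / 3 ≤ ((quotSet (B - C')).card : ℝ) := by
  classical
  refine ⟨3, by norm_num, ?_⟩
  intro F _ _ _ B C' hBC hcard
  obtain ⟨ψ, hψ⟩ := BalogAux.exists_prim F
  set q : ℕ := Fintype.card F with hqdef
  have hq0 : 0 < (q:ℝ) := by exact_mod_cast Fintype.card_pos
  set P : ℝ := (B.card : ℝ) * C'.card with hPdef
  have hP3 : 3 * (q:ℝ) ≤ P := hcard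
  have hPpos : 0 < P := lt_of_lt_of_le (by positivity) hP3
  have hBq : (B.card : ℝ) ≤ q := by exact_mod_cast Finset.card_le_univ B
  have hCq : (C'.card : ℝ) ≤ q := by exact_mod_cast Finset.card_le_univ C'
  have hq3 : (3:ℝ) ≤ q := by nlinarith
  have hdisj : ∀ b ∈ B, b ∉ C' := fun b hb hc => by
    have hmem : b ∈ B ∩ C' := Finset.mem_inter.2 ⟨hb, hc⟩
    simp [hBC] at hmem
  set Q : Finset F := quotSet (B - C') with hQdef
  set S : Finset F := (Finset.univ.erase (0:F)) \ Q with hSdef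
  set f : F → ℝ := fun a => ‖BalogAux.W ψ B a‖ with hfdef
  set g : F → ℝ := fun a => ‖BalogAux.W ψ C' a‖ with hgdef
  set T : ℝ := ∑ a ∈ Finset.univ.erase (0:F), f a * g a with hTdef
  -- per-x inequality
  have keyx : ∀ x ∈ S, P^2 ≤ ∑ a ∈ Finset.univ.erase (0:F),
      (f a * g a) * (f (a*x) * g (a*x)) := by
    intro x hxS
    have hxQ : x ∉ Q := (Finset.mem_sdiff.1 hxS).2
    have hquad : ∀ b1 ∈ B, ∀ c1 ∈ C', ∀ b2 ∈ B, ∀ c2 ∈ C',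
        b1 - c1 - x*b2 + x*c2 ≠ 0 := by
      intro b1 hb1 c1 hc1 b2 hb2 c2 hc2 heq
      have hb2c2 : b2 - c2 ≠ 0 := sub_ne_zero.2 (fun e => hdisj b2 hb2 (e ▸ hc2))
      have hxeq : x = (b1 - c1)/(b2 - c2) := by
        rw [eq_div_iff hb2c2]; linear_combination -heq
      refine hxQ ?_
      rw [hQdef, hxeq]
      exact Finset.mem_image.2 ⟨⟨b1 - c1, b2 - c2⟩,
        Finset.mem_product.2 ⟨Finset.sub_mem_sub hb1 hc1,
          Finset.mem_filter.2 ⟨Finset.sub_mem_sub hb2 hc2, hb2c2⟩⟩, rfl⟩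
    have hq4 := BalogAux.quad_sum ψ hψ B C' x hquad
    set hh : F → ℂ := fun a =>
      (BalogAux.W ψ B a * conj (BalogAux.W ψ C' a)) *
        conj (BalogAux.W ψ B (a*x) * conj (BalogAux.W ψ C' (a*x))) with hhdef
    have hsplit : ∑ a ∈ Finset.univ.erase (0:F), hh a = - hh 0 := by
      have h5 := Finset.sum_erase_add Finset.univ hh (Finset.mem_univ (0:F))
      rw [hq4] at h5
      exact eq_neg_of_add_eq_zero_left h5
    have hh0 : hh 0 = ((P:ℝ):ℂ)^2 := by
      simp only [hhdef, zero_mul, BalogAux.W_zero]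
      rw [map_mul, Complex.conj_conj, Complex.conj_natCast, Complex.conj_natCast]
      push_cast [hPdef]
      ring
    have habs1 : ‖∑ a ∈ Finset.univ.erase (0:F), hh a‖ = P^2 := by
      rw [hsplit, hh0, ← Complex.ofReal_pow, ← Complex.ofReal_neg, Complex.norm_real, Real.norm_eq_abs,
        abs_neg]
      exact _root_.abs_of_nonneg (sq_nonneg P)
    have habs2 : ∀ a : F, ‖hh a‖ = (f a * g a) * (f (a*x) * g (a*x)) := by
      intro a
      simp only [hhdef, hfdef, hgdef, map_mul, norm_mul, Complex.norm_conj]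
    calc P^2 = ‖∑ a ∈ Finset.univ.erase (0:F), hh a‖ := habs1.symm
      _ ≤ ∑ a ∈ Finset.univ.erase (0:F), ‖hh a‖ :=
          norm_sum_le _ _
      _ = ∑ a ∈ Finset.univ.erase (0:F), (f a * g a) * (f (a*x) * g (a*x)) :=
          Finset.sum_congr rfl fun a _ => habs2 a
  -- Parseval (real form)
  have parsR : ∀ X : Finset F,
      ∑ a : F, (‖BalogAux.W ψ X a‖)^2 = (q:ℝ) * X.card := by
    intro X
    have h1 := BalogAux.pars ψ hψ X
    have h2 : ∑ a : F, (((‖BalogAux.W ψ X a‖)^2 : ℝ) : ℂ)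
        = (q:ℂ) * X.card := by
      rw [← h1]
      refine Finset.sum_congr rfl fun a _ => ?_
      rw [Complex.mul_conj, Complex.normSq_eq_norm_sq]
      try push_cast
      try ring
    exact_mod_cast h2
  -- image bound
  have himg : ∀ a ∈ Finset.univ.erase (0:F), ∑ x ∈ S, f (a*x) * g (a*x) ≤ T := by
    intro a ha
    have ha0 : a ≠ 0 := Finset.ne_of_mem_erase ha
    have hinj : ∀ x ∈ S, ∀ y ∈ S, a * x = a * y → x = y :=
      fun x _ y _ h => mul_left_cancel₀ ha0 h
    have himeq : ∑ y ∈ S.image (fun x => a * x), f y * g y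
        = ∑ x ∈ S, f (a*x) * g (a*x) := Finset.sum_image hinj
    rw [← himeq, hTdef]
    refine Finset.sum_le_sum_of_subset_of_nonneg ?_ (fun y _ _ =>
      mul_nonneg (norm_nonneg _) (norm_nonneg _))
    intro y hy
    obtain ⟨x, hxS, rfl⟩ := Finset.mem_image.1 hy
    have hx0 : x ≠ 0 := Finset.ne_of_mem_erase (Finset.mem_sdiff.1 hxS).1
    exact Finset.mem_erase.2 ⟨mul_ne_zero ha0 hx0, Finset.mem_univ _⟩
  -- main chain
  have hsum : (S.card : ℝ) * P^2 ≤ T^2 := by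
    have h3 : (S.card:ℝ) * P^2 ≤ ∑ x ∈ S, ∑ a ∈ Finset.univ.erase (0:F),
        (f a * g a) * (f (a*x) * g (a*x)) := by
      have h4 := Finset.sum_le_sum keyx
      rw [Finset.sum_const, nsmul_eq_mul] at h4
      exact h4
    have h5 : ∑ x ∈ S, ∑ a ∈ Finset.univ.erase (0:F), (f a * g a) * (f (a*x) * g (a*x))
        = ∑ a ∈ Finset.univ.erase (0:F), (f a * g a) * ∑ x ∈ S, (f (a*x) * g (a*x)) := by
      rw [Finset.sum_comm]
      exact Finset.sum_congr rfl fun a _ => (Finset.mul_sum _ _ _).symm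
    have h6 : ∑ a ∈ Finset.univ.erase (0:F), (f a * g a) * ∑ x ∈ S, (f (a*x) * g (a*x))
        ≤ ∑ a ∈ Finset.univ.erase (0:F), (f a * g a) * T :=
      Finset.sum_le_sum fun a ha => mul_le_mul_of_nonneg_left (himg a ha)
        (mul_nonneg (norm_nonneg _) (norm_nonneg _))
    have h7 : ∑ a ∈ Finset.univ.erase (0:F), (f a * g a) * T = T^2 := by
      rw [← Finset.sum_mul, ← hTdef]; ring
    calc (S.card:ℝ) * P^2 ≤ _ := h3
      _ = _ := h5
      _ ≤ _ := h6
      _ = T^2 := h7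
  have hT2 : T^2 ≤ (q:ℝ)^2 * P := by
    have hcs := Finset.sum_mul_sq_le_sq_mul_sq (Finset.univ.erase (0:F)) f g
    have hfb : ∑ a ∈ Finset.univ.erase (0:F), f a ^ 2 ≤ (q:ℝ) * B.card := by
      rw [← parsR B]
      exact Finset.sum_le_sum_of_subset_of_nonneg (Finset.subset_univ _)
        (fun a _ _ => sq_nonneg _)
    have hgb : ∑ a ∈ Finset.univ.erase (0:F), g a ^ 2 ≤ (q:ℝ) * C'.card := by
      rw [← parsR C']
      exact Finset.sum_le_sum_of_subset_of_nonneg (Finset.subset_univ _)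
        (fun a _ _ => sq_nonneg _)
    have hfnn : (0:ℝ) ≤ ∑ a ∈ Finset.univ.erase (0:F), f a ^ 2 :=
      Finset.sum_nonneg fun a _ => sq_nonneg _
    calc T^2 ≤ (∑ a ∈ Finset.univ.erase (0:F), f a ^ 2) *
          (∑ a ∈ Finset.univ.erase (0:F), g a ^ 2) := hcs
      _ ≤ ((q:ℝ) * B.card) * ((q:ℝ) * C'.card) := by
          apply mul_le_mul hfb hgb (Finset.sum_nonneg fun a _ => sq_nonneg _)
          positivity
      _ = (q:ℝ)^2 * P := by rw [hPdef]; ring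
  have hScard : (S.card : ℝ) * P ≤ (q:ℝ)^2 := by
    refine le_of_mul_le_mul_right ?_ hPpos
    calc (S.card:ℝ) * P * P = (S.card:ℝ) * P^2 := by ring
      _ ≤ T^2 := hsum
      _ ≤ (q:ℝ)^2 * P := hT2
  have hS3 : (S.card:ℝ) * 3 ≤ q := by
    refine le_of_mul_le_mul_right ?_ hq0
    nlinarith [mul_nonneg (Nat.cast_nonneg S.card : (0:ℝ) ≤ S.card)
      (sub_nonneg.2 hP3), hScard]
  have hsub : Finset.univ.erase (0:F) ⊆ S ∪ Q := by
    intro y hy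
    by_cases h : y ∈ Q
    · exact Finset.mem_union_right _ h
    · exact Finset.mem_union_left _ (Finset.mem_sdiff.2 ⟨hy, h⟩)
  have hcount : (q:ℝ) - 1 ≤ (S.card:ℝ) + Q.card := by
    have h8 : (Finset.univ.erase (0:F)).card = q - 1 := by
      rw [Finset.card_erase_of_mem (Finset.mem_univ _), Finset.card_univ]
    have h9 : (Finset.univ.erase (0:F)).card ≤ S.card + Q.card :=
      le_trans (Finset.card_le_card hsub) (Finset.card_union_le _ _)
    rw [h8] at h9
    have hq1 : (1:ℕ) ≤ q := Fintype.card_pos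
    have h10 : ((q - 1 : ℕ) : ℝ) = (q:ℝ) - 1 := by
      rw [Nat.cast_sub hq1]; norm_num
    have h11 : ((q - 1 : ℕ) : ℝ) ≤ (S.card:ℝ) + Q.card := by exact_mod_cast h9
    linarith
  linarith
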